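/- arXiv:1603.09138 — 5 statements merged into one kernel-verified Lean document; each statement's English description precedes it below -/
import Mathlib

section
/- (Deterministic oracle inequality.) Let 𝕫 be an n×p1 real matrix, Y = 𝕫β + ε ∈ R^n with supp(β) = S, |S| = s. Let P_e : R^{p1} → [0,∞) be a convex penalty satisfying (A3) relative to S with constants L1 > 1/2 and L2, and let β̂ be any minimizer of θ ↦ (2n)^{−1}‖Y − 𝕫θ‖₂² + λ_n P_e(θ) with λ_n > 0. If 2‖𝕫^T ε / n‖_∞ ≤ λ_n and M(k0, s) > 0 with k0 = (2L2+1)/(2L1−1), then v = β̂ − β satisfies ‖v_{S^c}‖₁ ≤ k0 ‖v_S‖₁ and ‖v‖₁ ≤ λ_n (L1 + L2)² s / ((2L1 − 1) M(k0,s)²). -/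
open MeasureTheory ProbabilityTheory Finset Real Pointwise

noncomputable section

/-- Index type for main effects and two-way interactions: `p1 = p(p+1)/2` coordinates. -/
def InterIdx (p : ℕ) : Type := Fin p ⊕ {e : Fin p × Fin p // e.1 < e.2}

instance (p : ℕ) : Fintype (InterIdx p) := by unfold InterIdx; infer_instance
instance (p : ℕ) : DecidableEq (InterIdx p) := by unfold InterIdx; infer_instance

/-- The interaction vector of a vector `x ∈ ℝ^p`. -/
def interVec {p : ℕ} (x : Fin p → ℝ) : InterIdx p → ℝ :=
  fun j => match j with
  | Sum.inl i => x i
  | Sum.inr e => x e.1.1 * x e.1.2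

/-- Euclidean norm. -/
def l2 {ι : Type*} [Fintype ι] (v : ι → ℝ) : ℝ := Real.sqrt (∑ i, v i ^ 2)

/-- ℓ¹ norm. -/
def l1 {ι : Type*} [Fintype ι] (v : ι → ℝ) : ℝ := ∑ i, |v i|

/-- `restr v J` equals `v` on `J` and vanishes off `J`. -/
def restr {ι : Type*} [Fintype ι] [DecidableEq ι] (v : ι → ℝ) (J : Finset ι) : ι → ℝ :=
  fun i => if i ∈ J then v i else 0

/-- The restricted eigenvalue constant `M(k0, s)`. -/
def REconst {ι : Type*} [Fintype ι] [DecidableEq ι] {n : ℕ}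
    (Z : Matrix (Fin n) ι ℝ) (k0 : ℝ) (s : ℕ) : ℝ :=
  sInf { r : ℝ | ∃ (J : Finset ι) (α : ι → ℝ), J.card ≤ s ∧ restr α J ≠ 0 ∧
    l1 (restr α Jᶜ) ≤ k0 * l1 (restr α J) ∧
    r = l2 (Z.mulVec α) / (Real.sqrt n * l2 (restr α J)) }

/-- `‖ξ‖_{ψ₂} ≤ K` (with all moments finite). -/
def Psi2Bdd {Ω : Type*} [MeasurableSpace Ω] (μ : Measure Ω) (ξ : Ω → ℝ) (K : ℝ) : Prop :=
  ∀ q : ℝ, 1 ≤ q → Integrable (fun ω => |ξ ω| ^ q) μ ∧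
    (∫ ω, |ξ ω| ^ q ∂μ) ^ (1 / q) ≤ Real.sqrt q * K

/-- `‖ξ‖_{ψ₁} ≤ K` (subexponential, with all moments finite). -/
def Psi1Bdd {Ω : Type*} [MeasurableSpace Ω] (μ : Measure Ω) (ξ : Ω → ℝ) (K : ℝ) : Prop :=
  ∀ q : ℝ, 1 ≤ q → Integrable (fun ω => |ξ ω| ^ q) μ ∧
    (∫ ω, |ξ ω| ^ q ∂μ) ^ (1 / q) ≤ q * K

/-- `‖X‖_{ψ₂} ≤ K` for a random vector: every unit linear functional is `ψ₂`-bounded by `K`. -/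
def Psi2BddVec {Ω : Type*} [MeasurableSpace Ω] (μ : Measure Ω) {p : ℕ}
    (X : Ω → Fin p → ℝ) (K : ℝ) : Prop :=
  ∀ u : Fin p → ℝ, l2 u = 1 → Psi2Bdd μ (fun ω => ∑ i, u i * X ω i) K

/-- Centered interaction vector of `X`. -/
def centInter {Ω : Type*} [MeasurableSpace Ω] (μ : Measure Ω) {p : ℕ}
    (X : Ω → Fin p → ℝ) (ω : Ω) (j : InterIdx p) : ℝ :=
  interVec (X ω) j - ∫ ω', interVec (X ω') j ∂μ

/-- The CAP penalty with exponent `q`. -/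
def capPen {p : ℕ} (q : ℝ) (θ : InterIdx p → ℝ) : ℝ :=
  (∑ j : Fin p,
    (|θ (Sum.inl j)| ^ q +
      ∑ e : {e : Fin p × Fin p // e.1 < e.2},
        (if e.1.1 = j ∨ e.1.2 = j then |θ (Sum.inr e)| ^ q else 0)) ^ (1 / q))
  + ∑ e : {e : Fin p × Fin p // e.1 < e.2}, |θ (Sum.inr e)|

/-- The penalty of Bien, Taylor and Tibshirani. -/
def bienPen {p : ℕ} (θ : InterIdx p → ℝ) : ℝ :=
  (∑ j : Fin p,
    max (|θ (Sum.inl j)|)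
      (∑ e : {e : Fin p × Fin p // e.1 < e.2},
        (if e.1.1 = j ∨ e.1.2 = j then |θ (Sum.inr e)| else 0)))
  + ∑ e : {e : Fin p × Fin p // e.1 < e.2}, |θ (Sum.inr e)|

/-- (A1) strong hierarchy for a support set `S`. -/
def StrongHier {p : ℕ} (S : Finset (InterIdx p)) : Prop :=
  ∀ e : {e : Fin p × Fin p // e.1 < e.2}, Sum.inr e ∈ S →
    Sum.inl e.1.1 ∈ S ∧ Sum.inl e.1.2 ∈ S

/-- The symmetric matrix `W(u)` built from the interaction coordinates of `u`. -/
def Wmat {p : ℕ} (u : InterIdx p → ℝ) : Matrix (Fin p) (Fin p) ℝ :=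
  fun i j =>
    if h : i < j then u (Sum.inr ⟨(i, j), h⟩)
    else if h' : j < i then u (Sum.inr ⟨(j, i), h'⟩) else 0

/-- The quadratic part `X^T W(u) X`. -/
def quadW {Ω : Type*} {p : ℕ} (X : Ω → Fin p → ℝ) (u : InterIdx p → ℝ) (ω : Ω) : ℝ :=
  ∑ i, ∑ j, Wmat u i j * X ω i * X ω j

/-- The linear part `X^T u^{(1)}`. -/
def linU {Ω : Type*} {p : ℕ} (X : Ω → Fin p → ℝ) (u : InterIdx p → ℝ) (ω : Ω) : ℝ :=
  ∑ i : Fin p, u (Sum.inl i) * X ω i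

/-- Covariance of two real random variables. -/
def cova {Ω : Type*} [MeasurableSpace Ω] (μ : Measure Ω) (f g : Ω → ℝ) : ℝ :=
  ∫ ω, (f ω - ∫ ω', f ω' ∂μ) * (g ω - ∫ ω', g ω' ∂μ) ∂μ

/-- Smallest eigenvalue of the covariance of the interaction vector of `X`. -/
def lamMinZ {Ω : Type*} [MeasurableSpace Ω] (μ : Measure Ω) {p : ℕ} (X : Ω → Fin p → ℝ) : ℝ :=
  sInf ((fun u : InterIdx p → ℝ =>
    variance (fun ω => ∑ j, u j * interVec (X ω) j) μ) '' {u | l2 u = 1})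

/-- Largest eigenvalue of the covariance of the interaction vector of `X`. -/
def lamMaxZ {Ω : Type*} [MeasurableSpace Ω] (μ : Measure Ω) {p : ℕ} (X : Ω → Fin p → ℝ) : ℝ :=
  sSup ((fun u : InterIdx p → ℝ =>
    variance (fun ω => ∑ j, u j * interVec (X ω) j) μ) '' {u | l2 u = 1})

/-- The measurable-space family for a joint family of vector and scalar random variables. -/
def jointMS {p n : ℕ} :
    ∀ k : Fin n ⊕ Fin n,
      MeasurableSpace (Sum.elim (fun _ : Fin n => Fin p → ℝ) (fun _ : Fin n => ℝ) k) :=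
  fun k => match k with
  | Sum.inl _ => inferInstanceAs (MeasurableSpace (Fin p → ℝ))
  | Sum.inr _ => inferInstanceAs (MeasurableSpace ℝ)

/-- The joint family `(X_1,…,X_n,ε_1,…,ε_n)`. -/
def jointFam {Ω : Type*} {p n : ℕ} (Xs : Fin n → Ω → Fin p → ℝ) (es : Fin n → Ω → ℝ) :
    ∀ k : Fin n ⊕ Fin n,
      Ω → Sum.elim (fun _ : Fin n => Fin p → ℝ) (fun _ : Fin n => ℝ) k :=
  fun k => match k with
  | Sum.inl i => Xs i
  | Sum.inr i => es i


/-- deterministic oracle inequality for a penalized least-squares estimator with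
a penalty satisfying (A3). -/
theorem statement_8 {n p1 : ℕ} (hn : 0 < n)
    (Z : Matrix (Fin n) (Fin p1) ℝ)
    (β : Fin p1 → ℝ) (ε : Fin n → ℝ) (S : Finset (Fin p1)) (s : ℕ)
    (hS : ∀ j, j ∈ S ↔ β j ≠ 0) (hs : S.card = s)
    (Pe : (Fin p1 → ℝ) → ℝ) (L1 L2 : ℝ) (hL1 : 1 / 2 < L1)
    (hPenonneg : ∀ θ, 0 ≤ Pe θ)
    (hconv : ConvexOn ℝ Set.univ Pe)
    (hPe0 : Pe 0 = 0)
    (hPesub : ∀ θ1 θ2, Pe (θ1 + θ2) ≤ Pe θ1 + Pe θ2)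
    (hPelow : ∀ θ, Pe (restr θ S) + L1 * l1 (restr θ Sᶜ) ≤ Pe θ)
    (hPeup : ∀ θ, Pe (restr θ S) ≤ L2 * l1 (restr θ S))
    (lam : ℝ) (hlam : 0 < lam)
    (βh : Fin p1 → ℝ)
    (hmin : ∀ θ : Fin p1 → ℝ,
      (2 * n : ℝ)⁻¹ * (∑ i, (Z.mulVec β i + ε i - Z.mulVec βh i) ^ 2) + lam * Pe βh ≤
        (2 * n : ℝ)⁻¹ * (∑ i, (Z.mulVec β i + ε i - Z.mulVec θ i) ^ 2) + lam * Pe θ)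
    (hnoise : ∀ j, 2 * (|∑ i, Z i j * ε i| / n) ≤ lam)
    (k0 : ℝ) (hk0 : k0 = (2 * L2 + 1) / (2 * L1 - 1))
    (M : ℝ) (hM : 0 < M)
    (hRE : ∀ (J : Finset (Fin p1)) (α : Fin p1 → ℝ), J.card ≤ s →
      l1 (restr α Jᶜ) ≤ k0 * l1 (restr α J) →
      M * (Real.sqrt n * l2 (restr α J)) ≤ l2 (Z.mulVec α)) :
    l1 (restr (βh - β) Sᶜ) ≤ k0 * l1 (restr (βh - β) S) ∧
      l1 (βh - β) ≤ lam * (L1 + L2) ^ 2 * s / ((2 * L1 - 1) * M ^ 2) := by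
  set v : Fin p1 → ℝ := βh - β with hv
  set a := l1 (restr v S) with ha
  set b := l1 (restr v Sᶜ) with hb
  have hvj : ∀ j, v j = βh j - β j := fun j => rfl
  clear_value a b v
  have ha0 : 0 ≤ a := by rw [ha]; exact Finset.sum_nonneg fun i _ => abs_nonneg _
  have hb0 : 0 ≤ b := by rw [hb]; exact Finset.sum_nonneg fun i _ => abs_nonneg _
  have hl1 : l1 v = a + b := by
    rw [ha, hb]
    unfold l1 restr
    rw [← Finset.sum_add_distrib]
    refine Finset.sum_congr rfl fun i _ => ?_
    by_cases h : i ∈ S <;> simp [h]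
  have hβ0 : ∀ j, j ∉ S → β j = 0 := fun j hj => by
    by_contra h; exact hj ((hS j).mpr h)
  set Q := ∑ i, (Z.mulVec v i) ^ 2 with hQ
  clear_value Q
  have hQ0 : 0 ≤ Q := by rw [hQ]; exact Finset.sum_nonneg fun i _ => sq_nonneg _
  have hnR : (0 : ℝ) < n := by exact_mod_cast hn
  have hmv : ∀ i, Z.mulVec v i = Z.mulVec βh i - Z.mulVec β i := by
    intro i
    simp only [hv, Matrix.mulVec, dotProduct, Pi.sub_apply, mul_sub]
    rw [Finset.sum_sub_distrib]
  set E := ∑ i, ε i * Z.mulVec v i with hE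
  clear_value E
  -- basic inequality
  have hsum1 : ∑ i, (Z.mulVec β i + ε i - Z.mulVec βh i) ^ 2
      = (∑ i, (ε i) ^ 2) - 2 * E + Q := by
    rw [hE, hQ, Finset.mul_sum, ← Finset.sum_sub_distrib, ← Finset.sum_add_distrib]
    refine Finset.sum_congr rfl fun i _ => ?_
    rw [hmv i]
    ring
  have hbasic := hmin β
  have hsum2 : ∑ i, (Z.mulVec β i + ε i - Z.mulVec β i) ^ 2 = ∑ i, (ε i) ^ 2 := by
    refine Finset.sum_congr rfl fun i _ => ?_
    ring
  rw [hsum1, hsum2] at hbasic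
  have hexpand : (2 * (n : ℝ))⁻¹ * ((∑ i, (ε i) ^ 2) - 2 * E + Q)
      = (2 * (n : ℝ))⁻¹ * (∑ i, (ε i) ^ 2) - (n : ℝ)⁻¹ * E + (2 * (n : ℝ))⁻¹ * Q := by
    field_simp
  have hineq : (2 * (n : ℝ))⁻¹ * Q + lam * Pe βh ≤ (n : ℝ)⁻¹ * E + lam * Pe β := by
    rw [hexpand] at hbasic
    linarith
  -- noise bound
  have hswap : E = ∑ j, (∑ i, Z i j * ε i) * v j := by
    rw [hE]
    simp only [Matrix.mulVec, dotProduct, Finset.mul_sum, Finset.sum_mul]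
    rw [Finset.sum_comm]
    exact Finset.sum_congr rfl fun j _ => Finset.sum_congr rfl fun i _ => by ring
  have hEle : E ≤ lam * n / 2 * l1 v := by
    rw [hswap]
    unfold l1
    rw [Finset.mul_sum]
    refine Finset.sum_le_sum fun j _ => ?_
    have hc : |∑ i, Z i j * ε i| ≤ lam * n / 2 := by
      have h := hnoise j
      have h2 : |∑ i, Z i j * ε i| / n ≤ lam / 2 := by linarith
      calc |∑ i, Z i j * ε i| = |∑ i, Z i j * ε i| / n * n := by
            field_simp
        _ ≤ lam / 2 * n := mul_le_mul_of_nonneg_right h2 hnR.le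
        _ = lam * n / 2 := by ring
    calc (∑ i, Z i j * ε i) * v j ≤ |(∑ i, Z i j * ε i) * v j| := le_abs_self _
      _ = |∑ i, Z i j * ε i| * |v j| := abs_mul _ _
      _ ≤ lam * n / 2 * |v j| := mul_le_mul_of_nonneg_right hc (abs_nonneg _)
  have hEn : (n : ℝ)⁻¹ * E ≤ lam / 2 * (a + b) := by
    have h := mul_le_mul_of_nonneg_left hEle (inv_nonneg.mpr hnR.le)
    rw [hl1] at h
    have e : (n : ℝ)⁻¹ * (lam * n / 2 * (a + b)) = lam / 2 * (a + b) := by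
      field_simp
    linarith [e ▸ h]
  -- penalty bound
  have hpen : Pe β - Pe βh ≤ L2 * a - L1 * b := by
    have h1 : Pe (restr βh S) + L1 * l1 (restr βh Sᶜ) ≤ Pe βh := hPelow βh
    have hb' : l1 (restr βh Sᶜ) = b := by
      rw [hb]
      unfold l1 restr
      refine Finset.sum_congr rfl fun i _ => ?_
      by_cases h : i ∈ Sᶜ
      · rw [if_pos h, if_pos h, hvj, hβ0 i (Finset.mem_compl.mp h), sub_zero]
      · rw [if_neg h, if_neg h]
    have hdecomp : β = restr βh S + restr (β - βh) S := by
      funext i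
      simp only [Pi.add_apply, restr, Pi.sub_apply]
      by_cases h : i ∈ S
      · rw [if_pos h, if_pos h]; ring
      · rw [if_neg h, if_neg h, hβ0 i h, add_zero]
    have h2 : Pe β ≤ Pe (restr βh S) + Pe (restr (β - βh) S) := by
      nth_rewrite 1 [hdecomp]
      exact hPesub _ _
    have h3 : Pe (restr (β - βh) S) ≤ L2 * a := by
      have h := hPeup (β - βh)
      have haeq : l1 (restr (β - βh) S) = a := by
        rw [ha]
        unfold l1 restr
        refine Finset.sum_congr rfl fun i _ => ?_
        by_cases hi : i ∈ S
        · rw [if_pos hi, if_pos hi, hvj, Pi.sub_apply, abs_sub_comm]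
        · rw [if_neg hi, if_neg hi]
      rw [haeq] at h
      exact h
    rw [hb'] at h1
    linarith
  -- key inequality
  have hpen' := mul_le_mul_of_nonneg_left hpen hlam.le
  have hKEY : (2 * (n : ℝ))⁻¹ * Q ≤ lam / 2 * (a + b) + lam * (L2 * a - L1 * b) := by
    linarith [hineq, hEn, hpen']
  have hcQ0 : 0 ≤ (2 * (n : ℝ))⁻¹ * Q := by positivity
  have hkey2 : (L1 - 1 / 2) * b ≤ (L2 + 1 / 2) * a := by
    have h5 : lam * ((L1 - 1 / 2) * b) ≤ lam * ((L2 + 1 / 2) * a) := by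
      linarith [hKEY, hcQ0]
    exact le_of_mul_le_mul_left h5 hlam
  have h2L1 : (0 : ℝ) < 2 * L1 - 1 := by linarith
  have hcone : b ≤ k0 * a := by
    rw [hk0, div_mul_eq_mul_div, le_div_iff₀ h2L1]
    linarith [hkey2]
  refine ⟨hcone, ?_⟩
  -- second part
  rcases Nat.eq_zero_or_pos s with hs0 | hsposN
  · have hSempty : S = ∅ := Finset.card_eq_zero.mp (by rw [hs, hs0])
    have haz : a = 0 := by
      rw [ha, hSempty]
      unfold l1 restr
      simp
    have hbz : b ≤ 0 := by
      rw [haz] at hkey2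
      have h' : (L1 - 1 / 2) * b ≤ (L1 - 1 / 2) * 0 := by
        rw [mul_zero]
        linarith [hkey2]
      exact le_of_mul_le_mul_left h' (by linarith)
    have hcast : (s : ℝ) = 0 := by rw [hs0]; norm_num
    rw [hl1, hcast]
    rw [mul_zero, zero_div]
    linarith
  · have hspos : (0 : ℝ) < s := by exact_mod_cast hsposN
    have hcone' : l1 (restr v Sᶜ) ≤ k0 * l1 (restr v S) := by
      rw [← ha, ← hb]; exact hcone
    have hre := hRE S v (le_of_eq hs) hcone'
    set P := ∑ i, (restr v S i) ^ 2 with hP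
    clear_value P
    have hP0 : 0 ≤ P := by rw [hP]; exact Finset.sum_nonneg fun i _ => sq_nonneg _
    have hsqL : (M * (Real.sqrt n * l2 (restr v S))) ^ 2 = M ^ 2 * ((n : ℝ) * P) := by
      have h1 : l2 (restr v S) ^ 2 = P := by
        rw [hP]; unfold l2
        exact Real.sq_sqrt (Finset.sum_nonneg fun i _ => sq_nonneg _)
      have h2 : Real.sqrt n ^ 2 = (n : ℝ) := Real.sq_sqrt hnR.le
      rw [mul_pow, mul_pow, h1, h2]
    have hsqR : (l2 (Z.mulVec v)) ^ 2 = Q := by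
      rw [hQ]; unfold l2
      exact Real.sq_sqrt (Finset.sum_nonneg fun i _ => sq_nonneg _)
    have h6 : M ^ 2 * ((n : ℝ) * P) ≤ Q := by
      calc M ^ 2 * ((n : ℝ) * P) = (M * (Real.sqrt n * l2 (restr v S))) ^ 2 := hsqL.symm
        _ ≤ (l2 (Z.mulVec v)) ^ 2 := by
            apply pow_le_pow_left₀ _ hre
            have : (0 : ℝ) ≤ l2 (restr v S) := Real.sqrt_nonneg _
            positivity
        _ = Q := hsqR
    have h8 : M ^ 2 * P / 2 ≤ (2 * (n : ℝ))⁻¹ * Q := by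
      rw [inv_mul_eq_div, le_div_iff₀ (by positivity : (0 : ℝ) < 2 * n)]
      linarith [h6]
    -- Cauchy-Schwarz : a^2 ≤ s * P
    have haS : a = ∑ i ∈ S, |v i| := by
      rw [ha]
      unfold l1 restr
      simp_rw [apply_ite abs, abs_zero]
      rw [Finset.sum_ite_mem, Finset.univ_inter]
    have hPS : P = ∑ i ∈ S, (v i) ^ 2 := by
      rw [hP]
      unfold restr
      simp_rw [apply_ite (· ^ 2), zero_pow (two_ne_zero)]
      rw [Finset.sum_ite_mem, Finset.univ_inter]
    have hCS : a ^ 2 ≤ (s : ℝ) * P := by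
      have h := Finset.sum_mul_sq_le_sq_mul_sq S (fun _ => (1 : ℝ)) (fun i => |v i|)
      simp only [one_mul, one_pow, Finset.sum_const, nsmul_eq_mul, mul_one] at h
      rw [haS, hPS]
      calc (∑ i ∈ S, |v i|) ^ 2 ≤ (S.card : ℝ) * ∑ i ∈ S, |v i| ^ 2 := h
        _ = (s : ℝ) * ∑ i ∈ S, (v i) ^ 2 := by
            rw [hs]
            congr 1
            exact Finset.sum_congr rfl fun i _ => sq_abs _
    -- combine
    have h9 : M ^ 2 * P / 2 ≤ lam / 2 * (a + b) + lam * (L2 * a - L1 * b) :=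
      le_trans h8 hKEY
    have hstar : M ^ 2 * a ^ 2 ≤ (s : ℝ) * lam * (1 + 2 * L2) * a
        - (s : ℝ) * lam * (2 * L1 - 1) * b := by
      linarith [mul_le_mul_of_nonneg_left hCS (sq_nonneg M),
        mul_le_mul_of_nonneg_left h9 (by positivity : (0 : ℝ) ≤ 2 * s)]
    have hq : 2 * (s : ℝ) * lam * (L1 + L2) * (M ^ 2 * a)
        ≤ M ^ 2 * (M ^ 2 * a ^ 2) + lam ^ 2 * (L1 + L2) ^ 2 * (s : ℝ) ^ 2 := by
      have h := sq_nonneg (M ^ 2 * a - lam * (L1 + L2) * (s : ℝ))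
      have e : (M ^ 2 * a - lam * (L1 + L2) * (s : ℝ)) ^ 2
          = M ^ 2 * (M ^ 2 * a ^ 2) + lam ^ 2 * (L1 + L2) ^ 2 * (s : ℝ) ^ 2
            - 2 * (s : ℝ) * lam * (L1 + L2) * (M ^ 2 * a) := by ring
      rw [e] at h
      linarith [h]
    have hM2star := mul_le_mul_of_nonneg_left hstar (sq_nonneg M)
    have hslam : (0 : ℝ) < (s : ℝ) * lam := mul_pos hspos hlam
    rw [hl1, le_div_iff₀ (by positivity : (0 : ℝ) < (2 * L1 - 1) * M ^ 2)]
    refine le_of_mul_le_mul_left ?_ hslam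
    linarith [hq, hM2star]

end
end

section
/- Let S ⊆ {1,…,p1} satisfy (A1), and let P_e be the CAP penalty with exponent q > 1. Then for all θ ∈ R^{p1}: P_e(θ) ≥ P_e(θ_S) + ‖θ_{S^c}‖₁, and P_e(θ) ≤ 3‖θ‖₁ (so in particular P_e(θ_S) ≤ 3‖θ_S‖₁); hence P_e satisfies (A3) with L1 = 1 and L2 = 3. -/
open MeasureTheory ProbabilityTheory Finset Real Pointwise

noncomputable section

lemma aux_sum_rpow_le {ι : Type*} [Fintype ι] (q : ℝ) (hq : 1 ≤ q)
    (a : ι → ℝ) (ha : ∀ i, 0 ≤ a i) :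
    (∑ i, a i ^ q) ≤ (∑ i, a i) ^ q := by
  have hs : 0 ≤ ∑ i, a i := Finset.sum_nonneg fun i _ => ha i
  have key : ∀ i : ι, a i ^ q ≤ a i * (∑ j, a j) ^ (q - 1) := by
    intro i
    have h1 : a i ≤ ∑ j, a j := Finset.single_le_sum (fun j _ => ha j) (Finset.mem_univ i)
    calc a i ^ q = a i ^ (1 + (q - 1)) := by norm_num
      _ = a i * a i ^ (q - 1) := by
          rw [Real.rpow_add_of_nonneg (ha i) zero_le_one (by linarith), Real.rpow_one]
      _ ≤ a i * (∑ j, a j) ^ (q - 1) :=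
          mul_le_mul_of_nonneg_left (Real.rpow_le_rpow (ha i) h1 (by linarith)) (ha i)
  calc (∑ i, a i ^ q) ≤ ∑ i, a i * (∑ j, a j) ^ (q - 1) := Finset.sum_le_sum fun i _ => key i
    _ = (∑ i, a i) * (∑ j, a j) ^ (q - 1) := by rw [← Finset.sum_mul]
    _ = (∑ i, a i) ^ q := by
        rw [← Real.rpow_one_add' hs (by norm_num; linarith)]
        norm_num

lemma aux_lq_le_l1 {ι : Type*} [Fintype ι] (q : ℝ) (hq : 1 ≤ q)
    (a : ι → ℝ) (ha : ∀ i, 0 ≤ a i) :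
    (∑ i, a i ^ q) ^ (1 / q) ≤ ∑ i, a i := by
  have hq0 : q ≠ 0 := by linarith
  have hs : 0 ≤ ∑ i, a i := Finset.sum_nonneg fun i _ => ha i
  have h1 : (∑ i, a i ^ q) ^ (1 / q) ≤ ((∑ i, a i) ^ q) ^ (1 / q) :=
    Real.rpow_le_rpow (Finset.sum_nonneg fun i _ => Real.rpow_nonneg (ha i) q)
      (aux_sum_rpow_le q hq a ha) (by positivity)
  calc (∑ i, a i ^ q) ^ (1 / q) ≤ ((∑ i, a i) ^ q) ^ (1 / q) := h1
    _ = ∑ i, a i := by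
        rw [← Real.rpow_mul hs, mul_one_div_cancel hq0, Real.rpow_one]

/-- Upper bound on the CAP penalty. -/
lemma aux_capPen_le {p : ℕ} (q : ℝ) (hq : 1 < q) (θ : InterIdx p → ℝ) :
    capPen q θ ≤ 3 * l1 θ := by
  have hq1 : (1:ℝ) ≤ q := le_of_lt hq
  -- per-group bound
  have hgroup : ∀ j : Fin p,
      (|θ (Sum.inl j)| ^ q +
        ∑ e : {e : Fin p × Fin p // e.1 < e.2},
          (if e.1.1 = j ∨ e.1.2 = j then |θ (Sum.inr e)| ^ q else 0)) ^ (1 / q)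
      ≤ |θ (Sum.inl j)| +
        ∑ e : {e : Fin p × Fin p // e.1 < e.2},
          (if e.1.1 = j ∨ e.1.2 = j then |θ (Sum.inr e)| else 0) := by
    intro j
    set a : Unit ⊕ {e : Fin p × Fin p // e.1 < e.2} → ℝ :=
      fun i => match i with
        | Sum.inl _ => |θ (Sum.inl j)|
        | Sum.inr e => if e.1.1 = j ∨ e.1.2 = j then |θ (Sum.inr e)| else 0 with ha_def
    have ha : ∀ i, 0 ≤ a i := by
      rintro (u | e) <;> simp only [ha_def]
      · exact abs_nonneg _
      · split_ifs <;> simp [abs_nonneg]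
    have hsum : (∑ i, a i ^ q) =
        |θ (Sum.inl j)| ^ q +
          ∑ e : {e : Fin p × Fin p // e.1 < e.2},
            (if e.1.1 = j ∨ e.1.2 = j then |θ (Sum.inr e)| ^ q else 0) := by
      rw [Fintype.sum_sum_type]
      simp only [ha_def, Finset.univ_unique, Finset.sum_const, Finset.card_singleton, one_smul]
      congr 1
      refine Finset.sum_congr rfl fun e _ => ?_
      split_ifs with h
      · rfl
      · exact Real.zero_rpow (by linarith)
    have hsum2 : (∑ i, a i) =
        |θ (Sum.inl j)| +
          ∑ e : {e : Fin p × Fin p // e.1 < e.2},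
            (if e.1.1 = j ∨ e.1.2 = j then |θ (Sum.inr e)| else 0) := by
      rw [Fintype.sum_sum_type]
      simp [ha_def]
    rw [← hsum, ← hsum2]
    exact aux_lq_le_l1 q hq1 a ha
  have hswap : ∀ c : {e : Fin p × Fin p // e.1 < e.2} → ℝ,
      (∑ j : Fin p, ∑ e : {e : Fin p × Fin p // e.1 < e.2},
        (if e.1.1 = j ∨ e.1.2 = j then c e else 0)) = ∑ e, 2 * c e := by
    intro c
    rw [Finset.sum_comm]
    refine Finset.sum_congr rfl fun e _ => ?_
    have hne : e.1.1 ≠ e.1.2 := ne_of_lt e.2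
    have hsplit : ∀ j : Fin p, (if e.1.1 = j ∨ e.1.2 = j then c e else 0)
        = (if e.1.1 = j then c e else 0) + (if e.1.2 = j then c e else 0) := by
      intro j
      by_cases h1 : e.1.1 = j <;> by_cases h2 : e.1.2 = j <;>
        simp [h1, h2] <;> first | (exact absurd (h1.trans h2.symm) hne) | skip
    simp only [hsplit, Finset.sum_add_distrib, Finset.sum_ite_eq, Finset.mem_univ, if_true]
    ring
  have hl1 : l1 θ = (∑ j : Fin p, |θ (Sum.inl j)|) +
      ∑ e : {e : Fin p × Fin p // e.1 < e.2}, |θ (Sum.inr e)| := by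
    simp [l1, InterIdx, Fintype.sum_sum_type]
  have h1 : capPen q θ ≤
      ((∑ j : Fin p, |θ (Sum.inl j)|) +
        ∑ e : {e : Fin p × Fin p // e.1 < e.2}, 2 * |θ (Sum.inr e)|) +
      ∑ e : {e : Fin p × Fin p // e.1 < e.2}, |θ (Sum.inr e)| := by
    unfold capPen
    have := Finset.sum_le_sum (fun j (_ : j ∈ (Finset.univ : Finset (Fin p))) => hgroup j)
    refine add_le_add (le_trans this (le_of_eq ?_)) le_rfl
    rw [Finset.sum_add_distrib, hswap (fun e => |θ (Sum.inr e)|)]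
  have hm : 0 ≤ ∑ j : Fin p, |θ (Sum.inl j)| :=
    Finset.sum_nonneg fun j _ => abs_nonneg _
  have hi : 0 ≤ ∑ e : {e : Fin p × Fin p // e.1 < e.2}, |θ (Sum.inr e)| :=
    Finset.sum_nonneg fun e _ => abs_nonneg _
  rw [hl1]
  have : (∑ e : {e : Fin p × Fin p // e.1 < e.2}, 2 * |θ (Sum.inr e)|)
      = 2 * ∑ e : {e : Fin p × Fin p // e.1 < e.2}, |θ (Sum.inr e)| := by
    rw [Finset.mul_sum]
  rw [this] at h1
  linarith

/-- under strong hierarchy (A1), the CAP penalty satisfies (A3) with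
`L1 = 1` and `L2 = 3`. -/
theorem statement_9 {p : ℕ} (q : ℝ) (hq : 1 < q)
    (S : Finset (InterIdx p)) (hA1 : StrongHier S) :
    ∀ θ : InterIdx p → ℝ,
      capPen q (restr θ S) + l1 (restr θ Sᶜ) ≤ capPen q θ ∧
        capPen q θ ≤ 3 * l1 θ ∧
        capPen q (restr θ S) ≤ 3 * l1 (restr θ S) := by
  intro θ
  classical
  have hq0 : q ≠ 0 := by linarith
  refine ⟨?_, aux_capPen_le q hq θ, by
    have := aux_capPen_le q hq (restr θ S)
    calc capPen q (restr θ S) ≤ 3 * l1 (restr θ S) := this⟩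
  -- lower bound
  have habs : ∀ (J : Finset (InterIdx p)) (i : InterIdx p),
      |restr θ J i| = if i ∈ J then |θ i| else 0 := by
    intro J i
    unfold restr
    split_ifs <;> simp
  -- group expressions
  set G : (InterIdx p → ℝ) → Fin p → ℝ := fun v j =>
    |v (Sum.inl j)| ^ q +
      ∑ e : {e : Fin p × Fin p // e.1 < e.2},
        (if e.1.1 = j ∨ e.1.2 = j then |v (Sum.inr e)| ^ q else 0) with hG
  have hGnonneg : ∀ (v : InterIdx p → ℝ) (j : Fin p), 0 ≤ G v j := by
    intro v j
    refine add_nonneg (Real.rpow_nonneg (abs_nonneg _) q) (Finset.sum_nonneg fun e _ => ?_)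
    split_ifs <;> simp [Real.rpow_nonneg (abs_nonneg _)]
  -- per-group lower bound
  have hkey : ∀ j : Fin p,
      (G (restr θ S) j) ^ (1 / q) +
        (if Sum.inl j ∈ S then 0 else |θ (Sum.inl j)|) ≤ (G θ j) ^ (1 / q) := by
    intro j
    by_cases hjS : Sum.inl j ∈ S
    · simp only [hjS, if_true, add_zero]
      refine Real.rpow_le_rpow (hGnonneg _ j) ?_ (by positivity)
      refine add_le_add ?_ (Finset.sum_le_sum fun e _ => ?_)
      · rw [habs S (Sum.inl j)]
        split_ifs <;>
          first
            | rfl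
            | exact Real.rpow_le_rpow (by norm_num) (abs_nonneg _) (by linarith)
      · split_ifs with h
        · rw [habs S (Sum.inr e)]
          split_ifs
          · rfl
          · exact Real.rpow_le_rpow (by norm_num) (abs_nonneg _) (by linarith)
        · rfl
    · -- G (restr θ S) j = 0 and G θ j ≥ |θ_j|^q
      have hGS : G (restr θ S) j = 0 := by
        rw [hG]
        simp only
        rw [habs S (Sum.inl j)]
        split_ifs with hh
        · exact absurd hh hjS
        rw [Real.zero_rpow hq0, zero_add]
        refine Finset.sum_eq_zero fun e _ => ?_
        split_ifs with h
        · rw [habs S (Sum.inr e)]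
          have : Sum.inr e ∉ S := by
            intro hmem
            obtain ⟨h1, h2⟩ := hA1 e hmem
            rcases h with h | h
            · exact hjS (h ▸ h1)
            · exact hjS (h ▸ h2)
          split_ifs with hh2
          · exact absurd hh2 this
          · exact Real.zero_rpow hq0
        · rfl
      rw [hGS, Real.zero_rpow (by positivity : (1:ℝ)/q ≠ 0), zero_add, if_neg hjS]
      have hle : |θ (Sum.inl j)| ^ q ≤ G θ j := by
        rw [hG]
        simp only
        refine le_add_of_nonneg_right (Finset.sum_nonneg fun e _ => ?_)
        split_ifs <;> simp [Real.rpow_nonneg (abs_nonneg _)]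
      calc |θ (Sum.inl j)| = (|θ (Sum.inl j)| ^ q) ^ (1 / q) := by
            rw [← Real.rpow_mul (abs_nonneg _), mul_one_div_cancel hq0, Real.rpow_one]
        _ ≤ (G θ j) ^ (1 / q) :=
            Real.rpow_le_rpow (Real.rpow_nonneg (abs_nonneg _) q) hle (by positivity)
  -- expand l1 of the complement restriction
  have hl1c : l1 (restr θ Sᶜ) =
      (∑ j : Fin p, if Sum.inl j ∈ S then 0 else |θ (Sum.inl j)|) +
      ∑ e : {e : Fin p × Fin p // e.1 < e.2},
        (if Sum.inr e ∈ S then 0 else |θ (Sum.inr e)|) := by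
    unfold l1
    rw [show (∑ i : InterIdx p, |restr θ Sᶜ i|)
        = (∑ j : Fin p, |restr θ Sᶜ (Sum.inl j)|)
          + ∑ e : {e : Fin p × Fin p // e.1 < e.2}, |restr θ Sᶜ (Sum.inr e)| from
      Fintype.sum_sum_type (f := fun i : Fin p ⊕ {e : Fin p × Fin p // e.1 < e.2} =>
        |restr θ Sᶜ i|)]
    congr 1
    · refine Finset.sum_congr rfl fun j _ => ?_
      rw [habs Sᶜ (Sum.inl j)]
      by_cases h : Sum.inl j ∈ S <;> simp [h]
      · exact fun h' => absurd h (Finset.mem_compl.mp h')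
      · exact fun h' => absurd (Finset.mem_compl.mpr h) h'
    · refine Finset.sum_congr rfl fun e _ => ?_
      rw [habs Sᶜ (Sum.inr e)]
      by_cases h : Sum.inr e ∈ S <;> simp [h]
      · exact fun h' => absurd h (Finset.mem_compl.mp h')
      · exact fun h' => absurd (Finset.mem_compl.mpr h) h'
  -- expand the interaction l1 parts
  have hsplit : ∀ e : {e : Fin p × Fin p // e.1 < e.2},
      |restr θ S (Sum.inr e)| + (if Sum.inr e ∈ S then 0 else |θ (Sum.inr e)|)
        = |θ (Sum.inr e)| := by
    intro e
    rw [habs S (Sum.inr e)]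
    split_ifs with h1 h2 h3 <;> simp
    · exact absurd h1 h2
    · exact absurd h3 h1
  -- put everything together
  unfold capPen
  rw [hl1c]
  have hsum1 : (∑ j : Fin p, (G (restr θ S) j) ^ (1 / q)) +
      (∑ j : Fin p, if Sum.inl j ∈ S then 0 else |θ (Sum.inl j)|)
      ≤ ∑ j : Fin p, (G θ j) ^ (1 / q) := by
    rw [← Finset.sum_add_distrib]
    exact Finset.sum_le_sum fun j _ => hkey j
  have hsum2 : (∑ e : {e : Fin p × Fin p // e.1 < e.2}, |restr θ S (Sum.inr e)|) +
      (∑ e : {e : Fin p × Fin p // e.1 < e.2},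
        (if Sum.inr e ∈ S then 0 else |θ (Sum.inr e)|))
      = ∑ e : {e : Fin p × Fin p // e.1 < e.2}, |θ (Sum.inr e)| := by
    rw [← Finset.sum_add_distrib]
    exact Finset.sum_congr rfl fun e _ => hsplit e
  have hGr : ∀ (v : InterIdx p → ℝ), (∑ j : Fin p,
      (|v (Sum.inl j)| ^ q +
        ∑ e : {e : Fin p × Fin p // e.1 < e.2},
          (if e.1.1 = j ∨ e.1.2 = j then |v (Sum.inr e)| ^ q else 0)) ^ (1 / q))
      = ∑ j : Fin p, (G v j) ^ (1 / q) := fun v => rfl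
  rw [hGr (restr θ S), hGr θ]
  linarith [hsum1, hsum2.ge, hsum2.le]

end
end

section
/- Let S ⊆ {1,…,p1} satisfy (A1), and let P_e be Bien et al.'s penalty. Then for all θ ∈ R^{p1}: P_e(θ) ≥ P_e(θ_S) + ‖θ_{S^c}‖₁, and P_e(θ) ≤ 3‖θ‖₁; hence P_e satisfies (A3) with L1 = 1 and L2 = 3. -/
open MeasureTheory ProbabilityTheory Finset Real Pointwise

noncomputable section

lemma sum_interIdx {p : ℕ} (f : InterIdx p → ℝ) :
    ∑ i, f i = (∑ j : Fin p, f (Sum.inl j)) +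
      ∑ e : {e : Fin p × Fin p // e.1 < e.2}, f (Sum.inr e) :=
  Fintype.sum_sum_type f

lemma bienPen_le_three {p : ℕ} (θ : InterIdx p → ℝ) : bienPen θ ≤ 3 * l1 θ := by
  unfold bienPen l1
  rw [sum_interIdx (fun i => |θ i|)]
  have hsum : ∑ j : Fin p,
      (∑ e : {e : Fin p × Fin p // e.1 < e.2},
        (if e.1.1 = j ∨ e.1.2 = j then |θ (Sum.inr e)| else 0))
      = 2 * ∑ e : {e : Fin p × Fin p // e.1 < e.2}, |θ (Sum.inr e)| := by
    rw [Finset.sum_comm, Finset.mul_sum]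
    refine Finset.sum_congr rfl fun e _ => ?_
    have hne : e.1.1 ≠ e.1.2 := ne_of_lt e.2
    have : ∀ j : Fin p,
        (if e.1.1 = j ∨ e.1.2 = j then |θ (Sum.inr e)| else 0)
        = (if e.1.1 = j then |θ (Sum.inr e)| else 0)
          + (if e.1.2 = j then |θ (Sum.inr e)| else 0) := by
      intro j
      by_cases h1 : e.1.1 = j <;> by_cases h2 : e.1.2 = j <;>
        simp [h1, h2] at * <;> simp_all
    simp_rw [this, Finset.sum_add_distrib, Finset.sum_ite_eq, Finset.mem_univ,
      if_true]
    ring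
  have hmax : ∀ j : Fin p,
      max (|θ (Sum.inl j)|)
        (∑ e : {e : Fin p × Fin p // e.1 < e.2},
          (if e.1.1 = j ∨ e.1.2 = j then |θ (Sum.inr e)| else 0))
      ≤ |θ (Sum.inl j)| +
        ∑ e : {e : Fin p × Fin p // e.1 < e.2},
          (if e.1.1 = j ∨ e.1.2 = j then |θ (Sum.inr e)| else 0) := by
    intro j
    refine max_le (le_add_of_nonneg_right ?_) (le_add_of_nonneg_left (abs_nonneg _))
    exact Finset.sum_nonneg fun e _ => by positivity
  calc _ ≤ (∑ j : Fin p, (|θ (Sum.inl j)| +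
        ∑ e : {e : Fin p × Fin p // e.1 < e.2},
          (if e.1.1 = j ∨ e.1.2 = j then |θ (Sum.inr e)| else 0)))
        + ∑ e : {e : Fin p × Fin p // e.1 < e.2}, |θ (Sum.inr e)| := by
        gcongr with j _; exact hmax j
    _ ≤ _ := by
        rw [Finset.sum_add_distrib, hsum]
        have h1 : (0:ℝ) ≤ ∑ j : Fin p, |θ (Sum.inl j)| :=
          Finset.sum_nonneg fun _ _ => abs_nonneg _
        have h2 : (0:ℝ) ≤ ∑ e : {e : Fin p × Fin p // e.1 < e.2}, |θ (Sum.inr e)| :=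
          Finset.sum_nonneg fun _ _ => abs_nonneg _
        nlinarith

/-- under strong hierarchy (A1), the penalty of Bien et al. satisfies (A3) with
`L1 = 1` and `L2 = 3`. -/
theorem statement_10 {p : ℕ}
    (S : Finset (InterIdx p)) (hA1 : StrongHier S) :
    ∀ θ : InterIdx p → ℝ,
      bienPen (restr θ S) + l1 (restr θ Sᶜ) ≤ bienPen θ ∧
        bienPen θ ≤ 3 * l1 θ ∧
        bienPen (restr θ S) ≤ 3 * l1 (restr θ S) := by
  intro θ
  refine ⟨?_, bienPen_le_three θ, bienPen_le_three _⟩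
  unfold bienPen l1
  rw [sum_interIdx (fun i => |restr θ Sᶜ i|)]
  -- interaction part identity
  have hinter : ∀ e : {e : Fin p × Fin p // e.1 < e.2},
      |restr θ S (Sum.inr e)| + |restr θ Sᶜ (Sum.inr e)| = |θ (Sum.inr e)| := by
    intro e
    by_cases h : @Membership.mem (InterIdx p) _ _ S (Sum.inr e)
    · simp [restr, h, Finset.notMem_compl.mpr h]
    · simp [restr, h, Finset.mem_compl.mpr h]
  -- main effect part
  have hmain : ∀ j : Fin p,
      max (|restr θ S (Sum.inl j)|)
        (∑ e : {e : Fin p × Fin p // e.1 < e.2},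
          (if e.1.1 = j ∨ e.1.2 = j then |restr θ S (Sum.inr e)| else 0))
      + |restr θ Sᶜ (Sum.inl j)|
      ≤ max (|θ (Sum.inl j)|)
        (∑ e : {e : Fin p × Fin p // e.1 < e.2},
          (if e.1.1 = j ∨ e.1.2 = j then |θ (Sum.inr e)| else 0)) := by
    intro j
    by_cases hj : @Membership.mem (InterIdx p) _ _ S (Sum.inl j)
    · have h0 : |restr θ Sᶜ (Sum.inl j)| = 0 := by
        simp [restr, Finset.notMem_compl.mpr hj, hj]
      rw [h0, add_zero]
      refine max_le ?_ ?_
      · refine le_max_of_le_left ?_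
        simp only [restr, hj, if_true, le_refl]
      · refine le_max_of_le_right ?_
        refine Finset.sum_le_sum fun e _ => ?_
        split_ifs with h
        · by_cases hS : @Membership.mem (InterIdx p) _ _ S (Sum.inr e) <;> simp [restr, hS]
        · exact le_refl 0
    · have h1 : |restr θ S (Sum.inl j)| = 0 := by simp [restr, hj]
      have h2 : |restr θ Sᶜ (Sum.inl j)| = |θ (Sum.inl j)| := by
        simp [restr, Finset.mem_compl.mpr hj, hj]
      have h3 : ∀ e : {e : Fin p × Fin p // e.1 < e.2},
          (if e.1.1 = j ∨ e.1.2 = j then |restr θ S (Sum.inr e)| else 0) = 0 := by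
        intro e
        split_ifs with h
        · by_cases hS : @Membership.mem (InterIdx p) _ _ S (Sum.inr e)
          · exfalso
            obtain ⟨hl, hr⟩ := hA1 e hS
            rcases h with h | h
            · exact hj (h ▸ hl)
            · exact hj (h ▸ hr)
          · simp [restr, hS]
        · rfl
      rw [h1, h2]
      simp only [h3, Finset.sum_const_zero, max_self, zero_add]
      exact le_max_left _ _
  calc (∑ j : Fin p,
        max (|restr θ S (Sum.inl j)|)
          (∑ e : {e : Fin p × Fin p // e.1 < e.2},
            (if e.1.1 = j ∨ e.1.2 = j then |restr θ S (Sum.inr e)| else 0)))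
      + (∑ e : {e : Fin p × Fin p // e.1 < e.2}, |restr θ S (Sum.inr e)|)
      + ((∑ j : Fin p, |restr θ Sᶜ (Sum.inl j)|)
        + ∑ e : {e : Fin p × Fin p // e.1 < e.2}, |restr θ Sᶜ (Sum.inr e)|)
      = (∑ j : Fin p,
          (max (|restr θ S (Sum.inl j)|)
            (∑ e : {e : Fin p × Fin p // e.1 < e.2},
              (if e.1.1 = j ∨ e.1.2 = j then |restr θ S (Sum.inr e)| else 0))
            + |restr θ Sᶜ (Sum.inl j)|))
        + ∑ e : {e : Fin p × Fin p // e.1 < e.2},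
            (|restr θ S (Sum.inr e)| + |restr θ Sᶜ (Sum.inr e)|) := by
        rw [Finset.sum_add_distrib, Finset.sum_add_distrib]; ring
    _ ≤ _ := by
        rw [Finset.sum_congr rfl fun e _ => hinter e]
        gcongr with j _
        exact hmain j

end
end

section
/- For q > 1 define, for each j ∈ {1,…,p}, H̃_j = (θ_{kj} : k < j) and G̃_j = (θ_j, H̃_j), and let P_e(θ) = Σ_{j=1}^p ( ‖G̃_j‖_q + ‖H̃_j‖₁ ). Then for any S ⊆ {1,…,p1} satisfying (A1), P_e satisfies (A3) with L1 = 1 and L2 = 2: P_e(0)=0, P_e is subadditive, P_e(θ) ≥ P_e(θ_S) + ‖θ_{S^c}‖₁ for all θ, and P_e(θ_S) ≤ 2‖θ_S‖₁ for all θ. -/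
open MeasureTheory ProbabilityTheory Finset Real Pointwise

noncomputable section

/-- The nested penalty of Example 3. -/
def exPen2 {p : ℕ} (q : ℝ) (θ : InterIdx p → ℝ) : ℝ :=
  ∑ j : Fin p,
    ((|θ (Sum.inl j)| ^ q +
        ∑ e : {e : Fin p × Fin p // e.1 < e.2},
          (if e.1.2 = j then |θ (Sum.inr e)| ^ q else 0)) ^ (1 / q) +
      ∑ e : {e : Fin p × Fin p // e.1 < e.2},
        (if e.1.2 = j then |θ (Sum.inr e)| else 0))


section Statement12Aux

open NNReal in
private lemma pair_rpow_st12 {q a b : ℝ} (hq : 1 ≤ q) (ha : 0 ≤ a) (hb : 0 ≤ b) :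
    a ^ q + b ^ q ≤ (a + b) ^ q := by
  lift a to ℝ≥0 using ha
  lift b to ℝ≥0 using hb
  exact_mod_cast NNReal.add_rpow_le_rpow_add a b hq

private lemma sum_rpow_le_rpow_sum_st12 {ι : Type*} {q : ℝ} (hq : 1 ≤ q) (s : Finset ι)
    (f : ι → ℝ) (hf : ∀ i, 0 ≤ f i) : ∑ i ∈ s, f i ^ q ≤ (∑ i ∈ s, f i) ^ q := by
  induction s using Finset.cons_induction with
  | empty => simp [Real.rpow_nonneg]
  | cons a s ha ih =>
    rw [Finset.sum_cons, Finset.sum_cons]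
    calc f a ^ q + ∑ i ∈ s, f i ^ q ≤ f a ^ q + (∑ i ∈ s, f i) ^ q := add_le_add_right ih _
      _ ≤ (f a + ∑ i ∈ s, f i) ^ q :=
          pair_rpow_st12 hq (hf a) (Finset.sum_nonneg fun i _ => hf i)

/-- The group function: coordinates of `θ` belonging to group `j`, in absolute value. -/
private def gfun {p : ℕ} (θ : InterIdx p → ℝ) (j : Fin p) : InterIdx p → ℝ := fun i =>
  match i with
  | Sum.inl i' => if i' = j then |θ (Sum.inl i')| else 0
  | Sum.inr e => if e.1.2 = j then |θ (Sum.inr e)| else 0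

private lemma gfun_nonneg {p : ℕ} (θ : InterIdx p → ℝ) (j : Fin p) (i : InterIdx p) :
    0 ≤ gfun θ j i := by
  cases i <;> dsimp [gfun] <;> split <;> simp [abs_nonneg]

private lemma sum_gfun_rpow {p : ℕ} {q : ℝ} (hq : q ≠ 0) (θ : InterIdx p → ℝ) (j : Fin p) :
    ∑ i : InterIdx p, gfun θ j i ^ q
      = |θ (Sum.inl j)| ^ q + ∑ e : {e : Fin p × Fin p // e.1 < e.2},
          (if e.1.2 = j then |θ (Sum.inr e)| ^ q else 0) := by
  rw [show (∑ i : InterIdx p, gfun θ j i ^ q)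
      = (∑ i : Fin p, gfun θ j (Sum.inl i) ^ q)
        + ∑ e : {e : Fin p × Fin p // e.1 < e.2}, gfun θ j (Sum.inr e) ^ q from
    Fintype.sum_sum_type _]
  congr 1
  · have h : ∀ i : Fin p, gfun θ j (Sum.inl i) ^ q
        = if i = j then |θ (Sum.inl i)| ^ q else 0 := by
      intro i; dsimp [gfun]; split <;> simp [Real.zero_rpow hq]
    simp only [h]
    simp
  · refine Finset.sum_congr rfl fun e _ => ?_
    dsimp [gfun]; split <;> simp [Real.zero_rpow hq]

private lemma sum_gfun {p : ℕ} (θ : InterIdx p → ℝ) (j : Fin p) :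
    ∑ i : InterIdx p, gfun θ j i
      = |θ (Sum.inl j)| + ∑ e : {e : Fin p × Fin p // e.1 < e.2},
          (if e.1.2 = j then |θ (Sum.inr e)| else 0) := by
  rw [show (∑ i : InterIdx p, gfun θ j i)
      = (∑ i : Fin p, gfun θ j (Sum.inl i))
        + ∑ e : {e : Fin p × Fin p // e.1 < e.2}, gfun θ j (Sum.inr e) from
    Fintype.sum_sum_type _]
  simp [gfun]

private lemma l1_group {p : ℕ} (v : InterIdx p → ℝ) :
    l1 v = ∑ j : Fin p, (|v (Sum.inl j)| + ∑ e : {e : Fin p × Fin p // e.1 < e.2},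
        (if e.1.2 = j then |v (Sum.inr e)| else 0)) := by
  unfold l1
  rw [show (∑ i : InterIdx p, |v i|)
      = (∑ i : Fin p, |v (Sum.inl i)|)
        + ∑ e : {e : Fin p × Fin p // e.1 < e.2}, |v (Sum.inr e)| from
    Fintype.sum_sum_type _]
  rw [Finset.sum_add_distrib]
  congr 1
  rw [Finset.sum_comm]
  exact Finset.sum_congr rfl fun e _ => by simp

end Statement12Aux


private lemma st12_zero {p : ℕ} {q : ℝ} (hq : 1 < q) :
    exPen2 q (0 : InterIdx p → ℝ) = 0 := by
  have hq1 : 1 ≤ q := hq.le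
  have hqne : q ≠ 0 := by positivity
  have h1q : (0:ℝ) ≤ 1 / q := by positivity

  show exPen2 q (fun _ => 0) = 0
  simp [exPen2, Real.zero_rpow hqne, Real.zero_rpow (one_div_ne_zero hqne),
  Real.zero_rpow (inv_ne_zero hqne)]

private lemma st12_subadd {p : ℕ} {q : ℝ} (hq : 1 < q)
    (θ1 θ2 : InterIdx p → ℝ) : exPen2 q (θ1 + θ2) ≤ exPen2 q θ1 + exPen2 q θ2 := by
  have hq1 : 1 ≤ q := hq.le
  have hqne : q ≠ 0 := by positivity
  have h1q : (0:ℝ) ≤ 1 / q := by positivity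

  have := hq

  rw [exPen2, exPen2, exPen2, ← Finset.sum_add_distrib]
  refine Finset.sum_le_sum fun j _ => ?_
  have hB : (∑ e : {e : Fin p × Fin p // e.1 < e.2},
        (if e.1.2 = j then |(θ1 + θ2) (Sum.inr e)| else 0))
      ≤ (∑ e : {e : Fin p × Fin p // e.1 < e.2},
          (if e.1.2 = j then |θ1 (Sum.inr e)| else 0))
        + ∑ e : {e : Fin p × Fin p // e.1 < e.2},
          (if e.1.2 = j then |θ2 (Sum.inr e)| else 0) := by
    rw [← Finset.sum_add_distrib]
    refine Finset.sum_le_sum fun e _ => ?_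
    by_cases h : e.1.2 = j <;> simp [h, abs_add_le] <;> exact abs_add_le _ _
  have hA : (|(θ1 + θ2) (Sum.inl j)| ^ q + ∑ e : {e : Fin p × Fin p // e.1 < e.2},
        (if e.1.2 = j then |(θ1 + θ2) (Sum.inr e)| ^ q else 0)) ^ (1 / q)
      ≤ (|θ1 (Sum.inl j)| ^ q + ∑ e : {e : Fin p × Fin p // e.1 < e.2},
          (if e.1.2 = j then |θ1 (Sum.inr e)| ^ q else 0)) ^ (1 / q)
        + (|θ2 (Sum.inl j)| ^ q + ∑ e : {e : Fin p × Fin p // e.1 < e.2},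
          (if e.1.2 = j then |θ2 (Sum.inr e)| ^ q else 0)) ^ (1 / q) := by
    rw [← sum_gfun_rpow hqne (θ1 + θ2) j, ← sum_gfun_rpow hqne θ1 j,
      ← sum_gfun_rpow hqne θ2 j]
    calc (∑ i : InterIdx p, gfun (θ1 + θ2) j i ^ q) ^ (1 / q)
        ≤ (∑ i : InterIdx p, (gfun θ1 j i + gfun θ2 j i) ^ q) ^ (1 / q) := by
          refine Real.rpow_le_rpow
            (Finset.sum_nonneg fun i _ =>
              Real.rpow_nonneg (gfun_nonneg _ _ _) q)
            (Finset.sum_le_sum fun i _ => ?_) h1q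
          refine Real.rpow_le_rpow (gfun_nonneg _ _ _) ?_ (by positivity)
          cases i with
          | inl i' =>
            dsimp [gfun]
            by_cases h : i' = j <;> simp [h, abs_add_le] <;> exact abs_add_le _ _
          | inr e =>
            dsimp [gfun]
            by_cases h : e.1.2 = j <;> simp [h, abs_add_le] <;> exact abs_add_le _ _
      _ ≤ (∑ i : InterIdx p, gfun θ1 j i ^ q) ^ (1 / q)
          + (∑ i : InterIdx p, gfun θ2 j i ^ q) ^ (1 / q) :=
          Real.Lp_add_le_of_nonneg Finset.univ hq1
            (fun i _ => gfun_nonneg _ _ _) (fun i _ => gfun_nonneg _ _ _)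
  linarith

set_option maxHeartbeats 1000000 in
private lemma st12_three {p : ℕ} {q : ℝ} (hq : 1 < q) (S : Finset (InterIdx p)) (hA1 : StrongHier S) : 
    ∀ θ : InterIdx p → ℝ, exPen2 q (restr θ S) + l1 (restr θ Sᶜ) ≤ exPen2 q θ := by
  have hq1 : 1 ≤ q := hq.le
  have hqne : q ≠ 0 := by positivity
  have h1q : (0:ℝ) ≤ 1 / q := by positivity

  intro θ
  rw [exPen2, exPen2, l1_group, ← Finset.sum_add_distrib]
  refine Finset.sum_le_sum fun j _ => ?_
  have hBsplit : (∑ e : {e : Fin p × Fin p // e.1 < e.2},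
        (if e.1.2 = j then |restr θ S (Sum.inr e)| else 0))
      + ∑ e : {e : Fin p × Fin p // e.1 < e.2},
        (if e.1.2 = j then |restr θ Sᶜ (Sum.inr e)| else 0)
      = ∑ e : {e : Fin p × Fin p // e.1 < e.2},
          (if e.1.2 = j then |θ (Sum.inr e)| else 0) := by
    rw [← Finset.sum_add_distrib]
    refine Finset.sum_congr rfl fun e _ => ?_
    by_cases h : e.1.2 = j
    · by_cases hS : @Membership.mem (InterIdx p) _ _ S (Sum.inr e) <;>
        simp [h, restr, hS, Finset.mem_compl]
      · exact fun h' => absurd hS (Finset.mem_compl.1 h')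
      · rw [if_pos (Finset.mem_compl.2 hS)]
    · simp [h]
  have hmain : (|restr θ S (Sum.inl j)| ^ q + ∑ e : {e : Fin p × Fin p // e.1 < e.2},
        (if e.1.2 = j then |restr θ S (Sum.inr e)| ^ q else 0)) ^ (1 / q)
        + |restr θ Sᶜ (Sum.inl j)|
      ≤ (|θ (Sum.inl j)| ^ q + ∑ e : {e : Fin p × Fin p // e.1 < e.2},
          (if e.1.2 = j then |θ (Sum.inr e)| ^ q else 0)) ^ (1 / q) := by
    by_cases hj : @Membership.mem (InterIdx p) _ _ S (Sum.inl j)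
    · have hz : |restr θ Sᶜ (Sum.inl j)| = 0 := by
        simp [restr, Finset.mem_compl, hj]
        exact fun h => absurd hj (Finset.mem_compl.1 h)
      rw [hz, add_zero]
      refine Real.rpow_le_rpow ?_ ?_ h1q
      · positivity
      · refine add_le_add ?_ (Finset.sum_le_sum fun e _ => ?_)
        · refine Real.rpow_le_rpow (abs_nonneg _) ?_ (by positivity)
          by_cases hS : @Membership.mem (InterIdx p) _ _ S (Sum.inl j) <;> simp [restr, hS, abs_nonneg]
        · by_cases h : e.1.2 = j
          · simp only [h, if_true]
            refine Real.rpow_le_rpow (abs_nonneg _) ?_ (by positivity)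
            by_cases hS : @Membership.mem (InterIdx p) _ _ S (Sum.inr e) <;> simp [restr, hS, abs_nonneg]
          · simp [h]
    · have hz1 : |restr θ S (Sum.inl j)| = 0 := by simp [restr, hj]
      have hz2 : ∀ e : {e : Fin p × Fin p // e.1 < e.2},
          (if e.1.2 = j then |restr θ S (Sum.inr e)| ^ q else 0) = 0 := by
        intro e
        by_cases h : e.1.2 = j
        · have hS : ¬ @Membership.mem (InterIdx p) _ _ S (Sum.inr e) := fun hmem => hj (h ▸ (hA1 e hmem).2)
          simp [h, restr, hS, Real.zero_rpow hqne]
        · simp [h]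
      have hz3 : |restr θ Sᶜ (Sum.inl j)| = |θ (Sum.inl j)| := by
        simp [restr, Finset.mem_compl, hj]
        rw [if_pos (Finset.mem_compl.2 hj)]
      rw [hz1, hz3]
      simp only [hz2, Finset.sum_const_zero, add_zero]
      rw [Real.zero_rpow hqne, Real.zero_rpow (one_div_ne_zero hqne), zero_add]
      have h1 : |θ (Sum.inl j)| = (|θ (Sum.inl j)| ^ q) ^ (1 / q) := by
        rw [← Real.rpow_mul (abs_nonneg _), mul_one_div_cancel hqne, Real.rpow_one]
      conv_lhs => rw [h1]
      refine Real.rpow_le_rpow (by positivity) ?_ h1q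
      refine le_add_of_nonneg_right (Finset.sum_nonneg fun e _ => ?_)
      by_cases h : e.1.2 = j <;> simp [h, Real.rpow_nonneg]
  linarith

private lemma st12_four {p : ℕ} {q : ℝ} (hq : 1 < q) (S : Finset (InterIdx p)) (hA1 : StrongHier S) : 
    ∀ θ : InterIdx p → ℝ, exPen2 q (restr θ S) ≤ 2 * l1 (restr θ S) := by
  have hq1 : 1 ≤ q := hq.le
  have hqne : q ≠ 0 := by positivity
  have h1q : (0:ℝ) ≤ 1 / q := by positivity

  intro θ
  rw [exPen2, l1_group, Finset.mul_sum]
  refine Finset.sum_le_sum fun j _ => ?_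
  set G : ℝ := |restr θ S (Sum.inl j)| + ∑ e : {e : Fin p × Fin p // e.1 < e.2},
      (if e.1.2 = j then |restr θ S (Sum.inr e)| else 0) with hG
  have hBnn : (0:ℝ) ≤ ∑ e : {e : Fin p × Fin p // e.1 < e.2},
      (if e.1.2 = j then |restr θ S (Sum.inr e)| else 0) := by
    refine Finset.sum_nonneg fun e _ => ?_
    by_cases h : e.1.2 = j <;> simp [h, abs_nonneg]
  have hGnn : 0 ≤ G := by
    rw [hG]; exact add_nonneg (abs_nonneg _) hBnn
  have h1 : (|restr θ S (Sum.inl j)| ^ q + ∑ e : {e : Fin p × Fin p // e.1 < e.2},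
        (if e.1.2 = j then |restr θ S (Sum.inr e)| ^ q else 0)) ^ (1 / q) ≤ G := by
    have hsum : |restr θ S (Sum.inl j)| ^ q + (∑ e : {e : Fin p × Fin p // e.1 < e.2},
          (if e.1.2 = j then |restr θ S (Sum.inr e)| ^ q else 0)) ≤ G ^ q := by
      rw [← sum_gfun_rpow hqne (restr θ S) j, hG, ← sum_gfun (restr θ S) j]
      exact sum_rpow_le_rpow_sum_st12 hq1 _ _ (gfun_nonneg _ _)
    calc (|restr θ S (Sum.inl j)| ^ q + ∑ e : {e : Fin p × Fin p // e.1 < e.2},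
          (if e.1.2 = j then |restr θ S (Sum.inr e)| ^ q else 0)) ^ (1 / q)
        ≤ (G ^ q) ^ (1 / q) := Real.rpow_le_rpow (by positivity) hsum h1q
      _ = G := by rw [← Real.rpow_mul hGnn, mul_one_div_cancel hqne, Real.rpow_one]
  have h2 : (∑ e : {e : Fin p × Fin p // e.1 < e.2},
      (if e.1.2 = j then |restr θ S (Sum.inr e)| else 0)) ≤ G := by
    rw [hG]; exact le_add_of_nonneg_left (abs_nonneg _)
  calc _ ≤ G + G := add_le_add h1 h2
    _ = 2 * G := by ring




/-- Example 3: the nested penalty `exPen2` satisfies (A3) with `L1 = 1` and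
`L2 = 2` for any strongly hierarchical support `S`. -/
theorem statement_12 {p : ℕ} (q : ℝ) (hq : 1 < q)
    (S : Finset (InterIdx p)) (hA1 : StrongHier S) :
    exPen2 q (0 : InterIdx p → ℝ) = 0 ∧
      (∀ θ1 θ2 : InterIdx p → ℝ, exPen2 q (θ1 + θ2) ≤ exPen2 q θ1 + exPen2 q θ2) ∧
      (∀ θ : InterIdx p → ℝ, exPen2 q (restr θ S) + l1 (restr θ Sᶜ) ≤ exPen2 q θ) ∧
      (∀ θ : InterIdx p → ℝ, exPen2 q (restr θ S) ≤ 2 * l1 (restr θ S)) :=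
  ⟨st12_zero hq, st12_subadd hq, st12_three hq S hA1, st12_four hq S hA1⟩

end
end

section
/- Let X be a centered random vector in R^p with interaction vector Z, and suppose λ_max(Σ_z) < ∞ and (A4) holds: sup_{u ∈ S^{p1−1}} |ρ_u| ≤ ρ̄ < 1, where ρ_u = corr(X^T u^{(1)}, X^T W(u) X) when both variances are positive and ρ_u = 0 otherwise. Then sup_{u ∈ S^{p1−1}} Var( (1/2) X^T W(u) X ) ≤ λ_max(Σ_z)/(1 − ρ̄). -/
open MeasureTheory ProbabilityTheory Finset Real Pointwise

noncomputable section

section Aux14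

lemma quad_eq_aux14 {p : ℕ} (u : InterIdx p → ℝ) (x : Fin p → ℝ) :
    ∑ i, ∑ j, Wmat u i j * x i * x j
      = 2 * ∑ e : {e : Fin p × Fin p // e.1 < e.2}, u (Sum.inr e) * (x e.1.1 * x e.1.2) := by
  classical
  have key : ∀ s : Finset (Fin p × Fin p), (∀ z, z ∈ s ↔ z.1 < z.2) →
      ∑ z ∈ s, Wmat u z.1 z.2 * x z.1 * x z.2
        = ∑ e : {e : Fin p × Fin p // e.1 < e.2}, u (Sum.inr e) * (x e.1.1 * x e.1.2) := by
    intro s hs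
    rw [Finset.sum_subtype s hs (fun z => Wmat u z.1 z.2 * x z.1 * x z.2)]
    refine Finset.sum_congr rfl fun e _ => ?_
    have he : (e : Fin p × Fin p).1 < (e : Fin p × Fin p).2 := e.2
    simp only [Wmat, dif_pos he]
    ring
  rw [← Finset.sum_product']
  rw [← Finset.sum_filter_add_sum_filter_not (Finset.univ ×ˢ Finset.univ)
    (fun z : Fin p × Fin p => z.1 < z.2)]
  rw [← Finset.sum_filter_add_sum_filter_not
    ((Finset.univ ×ˢ Finset.univ).filter (fun z : Fin p × Fin p => ¬ z.1 < z.2))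
    (fun z : Fin p × Fin p => z.2 < z.1)]
  have h3 : ∑ z ∈ (((Finset.univ ×ˢ Finset.univ).filter
      (fun z : Fin p × Fin p => ¬ z.1 < z.2)).filter
      (fun z : Fin p × Fin p => ¬ z.2 < z.1)), Wmat u z.1 z.2 * x z.1 * x z.2 = 0 := by
    refine Finset.sum_eq_zero fun z hz => ?_
    simp only [Finset.mem_filter] at hz
    have : Wmat u z.1 z.2 = 0 := by
      simp only [Wmat, dif_neg hz.1.2, dif_neg hz.2]
    rw [this]; ring
  have h1 := key ((Finset.univ ×ˢ Finset.univ).filter (fun z : Fin p × Fin p => z.1 < z.2))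
    (fun z => by simp)
  have h2 : ∑ z ∈ (((Finset.univ ×ˢ Finset.univ).filter
      (fun z : Fin p × Fin p => ¬ z.1 < z.2)).filter
      (fun z : Fin p × Fin p => z.2 < z.1)), Wmat u z.1 z.2 * x z.1 * x z.2
        = ∑ e : {e : Fin p × Fin p // e.1 < e.2}, u (Sum.inr e) * (x e.1.1 * x e.1.2) := by
    rw [Finset.sum_nbij' (i := Prod.swap) (j := Prod.swap)
      (t := (Finset.univ ×ˢ Finset.univ).filter (fun z : Fin p × Fin p => z.1 < z.2))
      (g := fun z => Wmat u z.1 z.2 * x z.1 * x z.2)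
      (by intro a ha; simp only [Finset.mem_filter] at ha ⊢; exact ⟨by simp, ha.2⟩)
      (by intro a ha; simp only [Finset.mem_filter] at ha ⊢;
          exact ⟨⟨by simp, not_lt.2 ha.2.le⟩, ha.2⟩)
      (by intro a _; simp) (by intro a _; simp)
      (by intro a _; simp only [Prod.swap]
          have : Wmat u a.1 a.2 = Wmat u a.2 a.1 := by
            simp only [Wmat]
            rcases lt_trichotomy a.1 a.2 with h | h | h
            · rw [dif_pos h, dif_neg (not_lt.2 h.le), dif_pos h]
            · rw [dif_neg (h ▸ lt_irrefl _), dif_neg (h ▸ lt_irrefl _),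
                dif_neg (h ▸ lt_irrefl _), dif_neg (h ▸ lt_irrefl _)]
            · rw [dif_neg (not_lt.2 h.le), dif_pos h, dif_pos h]
          rw [this]; ring)]
    exact h1
  rw [h1, h2, h3]; ring

variable {Ω : Type*} [MeasureSpace Ω] [IsProbabilityMeasure (ℙ : Measure Ω)]

lemma integ_mul_of_L2_aux14 {f g : Ω → ℝ} (hf : MemLp f 2 ℙ) (hg : MemLp g 2 ℙ) :
    Integrable (fun ω => f ω * g ω) ℙ := by
  have h := hg.smul (φ := f) hf (p := 2) (q := 2) (r := 1)
  rw [← memLp_one_iff_integrable]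
  exact h

lemma cova_eq_aux14 {f g : Ω → ℝ} (hf : MemLp f 2 ℙ) (hg : MemLp g 2 ℙ) :
    cova ℙ f g = (∫ ω, f ω * g ω ∂ℙ) - (∫ ω, f ω ∂ℙ) * (∫ ω, g ω ∂ℙ) := by
  have hfi := hf.integrable one_le_two
  have hgi := hg.integrable one_le_two
  have hfg := integ_mul_of_L2_aux14 hf hg
  set mf := ∫ ω, f ω ∂ℙ
  set mg := ∫ ω, g ω ∂ℙ
  unfold cova
  change ∫ ω, (f ω - mf) * (g ω - mg) ∂ℙ = _
  have h1 : ∀ ω, (f ω - mf) * (g ω - mg)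
      = f ω * g ω - mf * g ω - (f ω * mg - mf * mg) := fun ω => by ring
  simp_rw [h1]
  have i1 : Integrable (fun ω => f ω * g ω - mf * g ω) ℙ := by
    exact hfg.sub (hgi.const_mul mf)
  have i2 : Integrable (fun ω => f ω * mg - mf * mg) ℙ := by
    exact (hfi.mul_const mg).sub (integrable_const _)
  rw [integral_sub i1 i2, integral_sub hfg (hgi.const_mul mf),
    integral_sub (hfi.mul_const mg) (integrable_const _),
    integral_const_mul, integral_mul_const, integral_const]
  simp [mf, mg]

omit [IsProbabilityMeasure (ℙ : Measure Ω)] in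
lemma cova_const_mul_right_aux14 (f g : Ω → ℝ) (c : ℝ) :
    cova ℙ f (fun ω => c * g ω) = c * cova ℙ f g := by
  unfold cova
  have h : (∫ ω, c * g ω ∂ℙ) = c * ∫ ω, g ω ∂ℙ := integral_const_mul c g
  have h2 : ∀ ω, (f ω - ∫ ω', f ω' ∂ℙ) * (c * g ω - c * ∫ ω', g ω' ∂ℙ)
      = c * ((f ω - ∫ ω', f ω' ∂ℙ) * (g ω - ∫ ω', g ω' ∂ℙ)) := fun ω => by ring
  rw [h]
  simp_rw [h2]
  exact integral_const_mul c _

lemma var_add_aux14 {f g : Ω → ℝ} (hf : MemLp f 2 ℙ) (hg : MemLp g 2 ℙ) :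
    variance (fun ω => f ω + g ω) ℙ
      = variance f ℙ + variance g ℙ + 2 * cova ℙ f g := by
  have hfi := hf.integrable one_le_two
  have hgi := hg.integrable one_le_two
  have hfg := integ_mul_of_L2_aux14 hf hg
  rw [variance_eq_sub (X := fun ω => f ω + g ω) (hf.add hg), variance_eq_sub hf, variance_eq_sub hg,
    cova_eq_aux14 hf hg]
  simp only [Pi.pow_apply]
  have h2 : (∫ ω, (f ω + g ω) ^ 2 ∂ℙ)
      = (∫ ω, f ω ^ 2 ∂ℙ) + 2 * (∫ ω, f ω * g ω ∂ℙ) + ∫ ω, g ω ^ 2 ∂ℙ := by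
    have h3 : ∀ ω, (f ω + g ω) ^ 2 = f ω ^ 2 + (2 * (f ω * g ω) + g ω ^ 2) := fun ω => by ring
    simp_rw [h3]
    have i3 : Integrable (fun ω => 2 * (f ω * g ω) + g ω ^ 2) ℙ := by
      exact (hfg.const_mul 2).add hg.integrable_sq
    rw [integral_add hf.integrable_sq i3,
      integral_add (hfg.const_mul 2) hg.integrable_sq, integral_const_mul]
    ring
  have h4 : (∫ ω, (f ω + g ω) ∂ℙ) = (∫ ω, f ω ∂ℙ) + ∫ ω, g ω ∂ℙ := integral_add hfi hgi
  rw [h2, h4]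
  ring

end Aux14

/-- under (A4) and `λ_max(Σ_z) < ∞`, the variance of the quadratic part is
uniformly bounded: `Var((1/2) X^T W(u) X) ≤ λ_max(Σ_z)/(1 − ρ̄)` for all unit `u`. -/
theorem statement_14 {Ω : Type*} [MeasureSpace Ω] [IsProbabilityMeasure (ℙ : Measure Ω)]
    {p : ℕ} (X : Ω → Fin p → ℝ) (hXm : Measurable X)
    (hcent : ∀ i, (∫ ω, X ω i ∂ℙ) = 0)
    (hL2 : ∀ j : InterIdx p, MemLp (fun ω => interVec (X ω) j) 2 ℙ)
    (hbdd : BddAbove ((fun u : InterIdx p → ℝ =>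
      variance (fun ω => ∑ j, u j * interVec (X ω) j) ℙ) '' {u | l2 u = 1}))
    (ρ : ℝ) (hρ0 : 0 ≤ ρ) (hρ : ρ < 1)
    (hA4 : ∀ u : InterIdx p → ℝ, l2 u = 1 →
      |cova ℙ (linU X u) (quadW X u)| ≤
        ρ * Real.sqrt (variance (linU X u) ℙ) * Real.sqrt (variance (quadW X u) ℙ)) :
    ∀ u : InterIdx p → ℝ, l2 u = 1 →
      variance (fun ω => 2⁻¹ * quadW X u ω) ℙ ≤ lamMaxZ ℙ X / (1 - ρ) := by
  intro u hu
  classical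
  set S : Ω → ℝ := fun ω =>
    ∑ e : {e : Fin p × Fin p // e.1 < e.2}, u (Sum.inr e) * (X ω e.1.1 * X ω e.1.2) with hS
  have hLm : MemLp (linU X u) 2 ℙ := by
    have : MemLp (fun ω => ∑ i : Fin p, u (Sum.inl i) * interVec (X ω) (Sum.inl i)) 2 ℙ :=
      memLp_finset_sum _ fun i _ => (hL2 (Sum.inl i)).const_mul _
    exact this
  have hSm : MemLp S 2 ℙ := by
    have : MemLp (fun ω => ∑ e : {e : Fin p × Fin p // e.1 < e.2},
        u (Sum.inr e) * interVec (X ω) (Sum.inr e)) 2 ℙ :=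
      memLp_finset_sum _ fun e _ => (hL2 (Sum.inr e)).const_mul _
    exact this
  have hQeq : quadW X u = fun ω => 2 * S ω := funext fun ω => quad_eq_aux14 u (X ω)
  have hQm : MemLp (quadW X u) 2 ℙ := by rw [hQeq]; exact hSm.const_mul 2
  have hQ2m : MemLp (fun ω => 2⁻¹ * quadW X u ω) 2 ℙ := hQm.const_mul _
  have hsum : (fun ω => ∑ j, u j * interVec (X ω) j)
      = fun ω => linU X u ω + 2⁻¹ * quadW X u ω := by
    funext ω
    have h0 : (∑ j : InterIdx p, u j * interVec (X ω) j)
        = (∑ i : Fin p, u (Sum.inl i) * interVec (X ω) (Sum.inl i))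
          + ∑ e : {e : Fin p × Fin p // e.1 < e.2},
              u (Sum.inr e) * interVec (X ω) (Sum.inr e) :=
      Fintype.sum_sum_type _
    rw [h0]
    have h1 : quadW X u ω
        = 2 * ∑ e : {e : Fin p × Fin p // e.1 < e.2},
            u (Sum.inr e) * (X ω e.1.1 * X ω e.1.2) := quad_eq_aux14 u (X ω)
    rw [h1]
    simp only [linU, interVec]
    ring
  set A := variance (linU X u) ℙ with hA
  set B := variance (fun ω => 2⁻¹ * quadW X u ω) ℙ with hB
  set VQ := variance (quadW X u) ℙ with hVQ
  have hA0 : 0 ≤ A := variance_nonneg _ _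
  have hB0 : 0 ≤ B := variance_nonneg _ _
  have hVQ0 : 0 ≤ VQ := variance_nonneg _ _
  have hBVQ : B = 2⁻¹ ^ 2 * VQ := variance_const_mul 2⁻¹ (quadW X u) ℙ
  have hVQB : VQ = 4 * B := by rw [hBVQ]; ring
  have hsqrtVQ : Real.sqrt VQ = 2 * Real.sqrt B := by
    rw [hVQB, show (4 : ℝ) * B = (2 : ℝ) ^ 2 * B by ring, Real.sqrt_mul (by positivity) B,
      Real.sqrt_sq (by norm_num : (0:ℝ) ≤ 2)]
  have hvar : variance (fun ω => ∑ j, u j * interVec (X ω) j) ℙ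
      = A + B + 2 * cova ℙ (linU X u) (fun ω => 2⁻¹ * quadW X u ω) := by
    rw [hsum]
    exact var_add_aux14 hLm hQ2m
  have hcov2 : cova ℙ (linU X u) (fun ω => 2⁻¹ * quadW X u ω)
      = 2⁻¹ * cova ℙ (linU X u) (quadW X u) :=
    cova_const_mul_right_aux14 (linU X u) (quadW X u) 2⁻¹
  have hC := hA4 u hu
  rw [← hA, ← hVQ] at hC
  have hsq : 2 * Real.sqrt A * Real.sqrt B ≤ A + B := by
    nlinarith [sq_nonneg (Real.sqrt A - Real.sqrt B), Real.sq_sqrt hA0, Real.sq_sqrt hB0]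
  have hCb : |cova ℙ (linU X u) (quadW X u)| ≤ ρ * (A + B) := by
    calc |cova ℙ (linU X u) (quadW X u)| ≤ ρ * Real.sqrt A * Real.sqrt VQ := hC
    _ = ρ * (2 * Real.sqrt A * Real.sqrt B) := by rw [hsqrtVQ]; ring
    _ ≤ ρ * (A + B) := by
        apply mul_le_mul_of_nonneg_left hsq hρ0
  have hVge : (1 - ρ) * B ≤ variance (fun ω => ∑ j, u j * interVec (X ω) j) ℙ := by
    rw [hvar, hcov2]
    have := neg_abs_le (cova ℙ (linU X u) (quadW X u))
    nlinarith [hCb]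
  have hVle : variance (fun ω => ∑ j, u j * interVec (X ω) j) ℙ ≤ lamMaxZ ℙ X :=
    le_csSup hbdd ⟨u, hu, rfl⟩
  rw [le_div_iff₀ (by linarith : (0:ℝ) < 1 - ρ)]
  calc B * (1 - ρ) = (1 - ρ) * B := by ring
  _ ≤ variance (fun ω => ∑ j, u j * interVec (X ω) j) ℙ := hVge
  _ ≤ lamMaxZ ℙ X := hVle


end
end
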